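/- Let U : ℝ_+ → ℝ be concave and differentiable on (0,∞), δ > 0, and let X̂, u be random variables with X̂ ≥ δ a.s. and u ≥ -δ/2 a.s., u bounded. If E[U(X̂ + ε u)] ≤ E[U(X̂)] for all ε ∈ (0,1), then E[u · U'(X̂)] ≤ 0. -/

import Mathlib

open MeasureTheory Filter Topology

/-- Slope monotonicity from concavity: difference quotients increase as the step shrinks. -/
lemma foc_slope_mono (U : ℝ → ℝ) (hUconc : ConcaveOn ℝ (Set.Ici 0) U)
    {x v a b : ℝ} (hx : 0 ≤ x) (hxb : 0 ≤ x + b * v) (ha : 0 < a) (hab : a ≤ b) :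
    (U (x + b * v) - U x) / b ≤ (U (x + a * v) - U x) / a := by
  have hb : 0 < b := ha.trans_le hab
  have ht0 : (0:ℝ) ≤ a / b := by positivity
  have ht1 : a / b ≤ 1 := (div_le_one hb).2 hab
  have key := hUconc.2 (Set.mem_Ici.2 hxb) (Set.mem_Ici.2 hx) ht0
    (by linarith : (0:ℝ) ≤ 1 - a / b) (by ring)
  have hpoint : (a / b) • (x + b * v) + (1 - a / b) • x = x + a * v := by
    simp only [smul_eq_mul]
    field_simp
    ring
  rw [hpoint] at key
  simp only [smul_eq_mul] at key
  have key2 : a * U (x + b * v) + (b - a) * U x ≤ b * U (x + a * v) := by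
    have h := mul_le_mul_of_nonneg_left key hb.le
    have heq : b * (a / b * U (x + b * v) + (1 - a / b) * U x)
        = a * U (x + b * v) + (b - a) * U x := by
      field_simp
    linarith [heq ▸ h]
  rw [div_le_div_iff₀ hb ha]
  nlinarith [key2]

/-- The difference quotients along `εₙ = 1/(n+2)` tend to `v * U' x`. -/
lemma foc_tendsto (U U' : ℝ → ℝ) (hUdiff : ∀ t : ℝ, 0 < t → HasDerivAt U (U' t) t)
    {x : ℝ} (hx : 0 < x) (v : ℝ) :
    Tendsto (fun n : ℕ => (U (x + ((n:ℝ)+2)⁻¹ * v) - U x) / ((n:ℝ)+2)⁻¹)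
      atTop (𝓝 (v * U' x)) := by
  have h1 : HasDerivAt (fun ε : ℝ => x + ε * v) v 0 := by
    simpa using ((hasDerivAt_id (0:ℝ)).mul_const v).const_add x
  have h2 : HasDerivAt (fun ε : ℝ => U (x + ε * v)) (U' x * v) 0 := by
    have := (hUdiff (x + 0 * v) (by simpa using hx)).comp 0 h1
    simp only [zero_mul, add_zero] at this
    exact this
  rw [hasDerivAt_iff_tendsto_slope] at h2
  have hεpos : ∀ n : ℕ, (0:ℝ) < ((n:ℝ)+2)⁻¹ := fun n => by positivity
  have hε0 : Tendsto (fun n : ℕ => ((n:ℝ)+2)⁻¹) atTop (𝓝 0) := by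
    apply Tendsto.inv_tendsto_atTop
    exact tendsto_atTop_add_const_right _ 2 tendsto_natCast_atTop_atTop
  have hεne : Tendsto (fun n : ℕ => ((n:ℝ)+2)⁻¹) atTop (𝓝[≠] (0:ℝ)) := by
    refine tendsto_nhdsWithin_of_tendsto_nhds_of_eventually_within _ hε0 ?_
    exact Eventually.of_forall fun n => (hεpos n).ne'
  have := h2.comp hεne
  have heq : ∀ n : ℕ, slope (fun ε : ℝ => U (x + ε * v)) 0 (((n:ℝ)+2)⁻¹)
      = (U (x + ((n:ℝ)+2)⁻¹ * v) - U x) / ((n:ℝ)+2)⁻¹ := by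
    intro n
    rw [slope_def_field]
    simp [div_eq_div_iff (hεpos n).ne' (hεpos n).ne']
  rw [mul_comm v (U' x)]
  refine Tendsto.congr (fun n => ?_) this
  simpa using heq n

/-- Tangent line bound for concave differentiable functions. -/
lemma foc_tangent (U U' : ℝ → ℝ) (hUconc : ConcaveOn ℝ (Set.Ici 0) U)
    (hUdiff : ∀ t : ℝ, 0 < t → HasDerivAt U (U' t) t)
    {x v : ℝ} (hx : 0 < x) (hxv : 0 ≤ x + v) :
    U (x + v) - U x ≤ v * U' x := by
  have htend := foc_tendsto U U' hUdiff hx v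
  refine ge_of_tendsto' htend fun n => ?_
  have hεpos : (0:ℝ) < ((n:ℝ)+2)⁻¹ := by positivity
  have hεle : ((n:ℝ)+2)⁻¹ ≤ (1:ℝ) := by
    rw [inv_le_one_iff₀]
    right; linarith [Nat.cast_nonneg (α := ℝ) n]
  have := foc_slope_mono U hUconc (v := v) hx.le (by simpa using hxv) hεpos hεle
  simpa using this

/-- `U'` is antitone on `(0,∞)`. -/
lemma foc_deriv_anti (U U' : ℝ → ℝ) (hUconc : ConcaveOn ℝ (Set.Ici 0) U)
    (hUdiff : ∀ t : ℝ, 0 < t → HasDerivAt U (U' t) t)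
    {s t : ℝ} (hs : 0 < s) (hst : s ≤ t) : U' t ≤ U' s := by
  rcases eq_or_lt_of_le hst with rfl | hlt
  · exact le_refl _
  · have ht : 0 < t := hs.trans hlt
    have h1 : U t - U s ≤ (t - s) * U' s :=
      by simpa using foc_tangent U U' hUconc hUdiff hs (by linarith : 0 ≤ s + (t - s))
    have h2 : U s - U t ≤ (s - t) * U' t :=
      by simpa using foc_tangent U U' hUconc hUdiff ht (by linarith : 0 ≤ t + (s - t))
    nlinarith [h1, h2]

/-- `U'` is nonnegative on `(0,∞)` when `U` is increasing. -/
lemma foc_deriv_nonneg (U U' : ℝ → ℝ) (hUconc : ConcaveOn ℝ (Set.Ici 0) U)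
    (hUmono : StrictMonoOn U (Set.Ici 0))
    (hUdiff : ∀ t : ℝ, 0 < t → HasDerivAt U (U' t) t)
    {x : ℝ} (hx : 0 < x) : 0 ≤ U' x := by
  have h := foc_tangent U U' hUconc hUdiff hx (by linarith : (0:ℝ) ≤ x + 1)
  have h2 : U x ≤ U (x + 1) :=
    (hUmono (Set.mem_Ici.2 hx.le) (Set.mem_Ici.2 (by linarith)) (by linarith)).le
  simpa using le_trans (by linarith) h

/-- First-order condition at a maximizer: if `U` is concave on
`ℝ_+` (continuous, strictly increasing, bounded above) with derivative `U'` on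
`(0,∞)`, `Xhat ≥ δ > 0` a.s., `u ≥ -δ/2` a.s. is bounded, and
`E[U(Xhat + ε u)] ≤ E[U(Xhat)]` for all `ε ∈ (0,1)`, then
`E[u ⬝ U'(Xhat)] ≤ 0`. -/
theorem first_order_condition
    {Ω : Type*} [MeasurableSpace Ω] (P : Measure Ω) [IsProbabilityMeasure P]
    (U U' : ℝ → ℝ) (hUconc : ConcaveOn ℝ (Set.Ici 0) U)
    (hUcont : ContinuousOn U (Set.Ici 0))
    (hUmono : StrictMonoOn U (Set.Ici 0))
    (hUbdd : ∃ B : ℝ, ∀ t ∈ Set.Ici (0:ℝ), U t ≤ B)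
    (hUdiff : ∀ t : ℝ, 0 < t → HasDerivAt U (U' t) t)
    (δ : ℝ) (hδ : 0 < δ)
    (Xhat u : Ω → ℝ) (hXmeas : Measurable Xhat) (humeas : Measurable u)
    (hXδ : ∀ᵐ ω ∂P, δ ≤ Xhat ω) (hu : ∀ᵐ ω ∂P, -(δ/2) ≤ u ω)
    (C : ℝ) (hubdd : ∀ᵐ ω ∂P, |u ω| ≤ C)
    (hmax : ∀ ε ∈ Set.Ioo (0:ℝ) 1,
      ∫ ω, U (Xhat ω + ε * u ω) ∂P ≤ ∫ ω, U (Xhat ω) ∂P) :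
    ∫ ω, u ω * U' (Xhat ω) ∂P ≤ 0 := by
  obtain ⟨B, hB⟩ := hUbdd
  set ε : ℕ → ℝ := fun n => ((n:ℝ)+2)⁻¹ with hεdef
  have hεpos : ∀ n, 0 < ε n := fun n => by positivity
  have hεle1 : ∀ n, ε n ≤ 1 := by
    intro n
    rw [hεdef]
    simp only
    rw [inv_le_one_iff₀]
    right; linarith [Nat.cast_nonneg (α := ℝ) n]
  have hεmem : ∀ n, ε n ∈ Set.Ioo (0:ℝ) 1 := by
    intro n
    refine ⟨hεpos n, ?_⟩
    rw [hεdef]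
    simp only
    rw [inv_lt_one_iff₀]
    right; linarith [Nat.cast_nonneg (α := ℝ) n]
  have hεanti : ∀ {n m : ℕ}, n ≤ m → ε m ≤ ε n := by
    intro n m hnm
    rw [hεdef]
    simp only
    apply inv_anti₀ (by positivity)
    have : (n:ℝ) ≤ (m:ℝ) := Nat.cast_le.2 hnm
    linarith
  have hE : ∀ᵐ ω ∂P, δ ≤ Xhat ω ∧ -(δ/2) ≤ u ω ∧ |u ω| ≤ C := by
    filter_upwards [hXδ, hu, hubdd] with ω h1 h2 h3
    exact ⟨h1, h2, h3⟩
  -- bound for |U| on [δ/2, ∞)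
  have hK : ∀ y : ℝ, δ/2 ≤ y → |U y| ≤ |B| + |U (δ/2)| := by
    intro y hy
    have hy0 : (0:ℝ) ≤ y := le_trans (by positivity) hy
    have h1 : U y ≤ B := hB y (Set.mem_Ici.2 hy0)
    have h2 : U (δ/2) ≤ U y :=
      (hUmono.monotoneOn) (Set.mem_Ici.2 (by positivity)) (Set.mem_Ici.2 hy0) hy
    rw [abs_le]
    constructor
    · linarith [neg_abs_le (U (δ/2)), abs_nonneg B]
    · linarith [le_abs_self B, abs_nonneg (U (δ/2))]
  have hUmax : Monotone (fun t : ℝ => U (max t (δ/2))) := by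
    intro s t hst
    exact (hUmono.monotoneOn) (Set.mem_Ici.2 (le_trans (by positivity) (le_max_right s _)))
      (Set.mem_Ici.2 (le_trans (by positivity) (le_max_right t _)))
      (max_le_max hst le_rfl)
  -- integrability of U(Xhat + c • u) for 0 < c ≤ 1
  have hint : ∀ c : ℝ, 0 < c → c ≤ 1 → Integrable (fun ω => U (Xhat ω + c * u ω)) P := by
    intro c hc hc1
    have hmeas : Measurable (fun ω => U (max (Xhat ω + c * u ω) (δ/2))) :=
      hUmax.measurable.comp (hXmeas.add (humeas.const_mul c))
    have hge : ∀ᵐ ω ∂P, δ/2 ≤ Xhat ω + c * u ω := by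
      filter_upwards [hE] with ω hω
      obtain ⟨h1, h2, _⟩ := hω
      nlinarith
    have haeeq : (fun ω => U (max (Xhat ω + c * u ω) (δ/2)))
        =ᵐ[P] (fun ω => U (Xhat ω + c * u ω)) := by
      filter_upwards [hge] with ω hω
      rw [max_eq_left hω]
    refine Integrable.mono' (integrable_const (|B| + |U (δ/2)|))
      (hmeas.aestronglyMeasurable.congr haeeq) ?_
    filter_upwards [hge] with ω hω
    simpa using hK _ hω
  have hintX : Integrable (fun ω => U (Xhat ω)) P := by
    have hmeas : Measurable (fun ω => U (max (Xhat ω) (δ/2))) :=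
      hUmax.measurable.comp hXmeas
    have hge : ∀ᵐ ω ∂P, δ/2 ≤ Xhat ω := by
      filter_upwards [hXδ] with ω h1; linarith
    have haeeq : (fun ω => U (max (Xhat ω) (δ/2))) =ᵐ[P] (fun ω => U (Xhat ω)) := by
      filter_upwards [hge] with ω hω
      rw [max_eq_left hω]
    refine Integrable.mono' (integrable_const (|B| + |U (δ/2)|))
      (hmeas.aestronglyMeasurable.congr haeeq) ?_
    filter_upwards [hge] with ω hω
    simpa using hK _ hω
  -- the difference quotients
  set g : ℕ → Ω → ℝ :=
    fun n ω => (U (Xhat ω + ε n * u ω) - U (Xhat ω)) / ε n with hgdef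
  have hgint : ∀ n, Integrable (g n) P := fun n =>
    ((hint (ε n) (hεpos n) (hεle1 n)).sub hintX).div_const (ε n)
  -- integrability of the limit
  have hVanti : Antitone (fun t : ℝ => U' (max t δ)) := by
    intro s t hst
    exact foc_deriv_anti U U' hUconc hUdiff (lt_of_lt_of_le hδ (le_max_right s δ))
      (max_le_max hst le_rfl)
  have hFaeeq : (fun ω => u ω * U' (max (Xhat ω) δ)) =ᵐ[P]
      (fun ω => u ω * U' (Xhat ω)) := by
    filter_upwards [hXδ] with ω h1
    rw [max_eq_left h1]
  have hFint : Integrable (fun ω => u ω * U' (Xhat ω)) P := by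
    have hmeas : Measurable (fun ω => u ω * U' (max (Xhat ω) δ)) :=
      humeas.mul (hVanti.measurable.comp hXmeas)
    refine Integrable.mono' (integrable_const (|C| * U' δ))
      (hmeas.aestronglyMeasurable.congr hFaeeq) ?_
    filter_upwards [hE] with ω hω
    obtain ⟨h1, h2, h3⟩ := hω
    have hx : 0 < Xhat ω := lt_of_lt_of_le hδ h1
    have h4 : 0 ≤ U' (Xhat ω) := foc_deriv_nonneg U U' hUconc hUmono hUdiff hx
    have h5 : U' (Xhat ω) ≤ U' δ := foc_deriv_anti U U' hUconc hUdiff hδ h1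
    rw [Real.norm_eq_abs, abs_mul, abs_of_nonneg h4]
    exact mul_le_mul (h3.trans (le_abs_self C)) h5 h4 (abs_nonneg C)
  -- monotonicity of the difference quotients
  have h_mono : ∀ᵐ ω ∂P, Monotone fun n => g n ω := by
    filter_upwards [hE] with ω hω
    obtain ⟨h1, h2, _⟩ := hω
    intro n m hnm
    refine foc_slope_mono U hUconc ?_ ?_ (hεpos m) (hεanti hnm)
    · linarith
    · nlinarith [hεpos n, hεle1 n]
  -- pointwise convergence
  have h_tendsto : ∀ᵐ ω ∂P,
      Tendsto (fun n => g n ω) atTop (𝓝 (u ω * U' (Xhat ω))) := by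
    filter_upwards [hXδ] with ω h1
    exact foc_tendsto U U' hUdiff (lt_of_lt_of_le hδ h1) (u ω)
  have hlim := integral_tendsto_of_tendsto_of_monotone hgint hFint h_mono h_tendsto
  refine le_of_tendsto' hlim fun n => ?_
  have hsub : ∫ ω, (U (Xhat ω + ε n * u ω) - U (Xhat ω)) ∂P
      = (∫ ω, U (Xhat ω + ε n * u ω) ∂P) - ∫ ω, U (Xhat ω) ∂P :=
    integral_sub (hint (ε n) (hεpos n) (hεle1 n)) hintX
  have : ∫ ω, g n ω ∂P
      = (∫ ω, (U (Xhat ω + ε n * u ω) - U (Xhat ω)) ∂P) / ε n := by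
    rw [hgdef]
    exact integral_div (ε n) _
  rw [this, hsub]
  exact div_nonpos_of_nonpos_of_nonneg (by linarith [hmax (ε n) (hεmem n)]) (hεpos n).le
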